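/- For every integer p ≥ 2 and every complex number s with Re s > 0, the function x ↦ x^{2s−1}·( coth(px)/sinh(2x) − 1/(2p·sinh²(x)) ) is integrable on the interval (0, ∞). -/

import Mathlib

open Real Complex MeasureTheory

/-- The elliptic fixed-point integrand `g_p(x) = coth(px)/sinh(2x) - 1/(2p sinh²x)`. -/
noncomputable def ellipticIntegrand (p : ℕ) (x : ℝ) : ℝ :=
  Real.cosh (p * x) / Real.sinh (p * x) / Real.sinh (2 * x) -
    1 / (2 * p * Real.sinh x ^ 2)

namespace EllipticAux

/-- The numerator function `F(x) = p sinh x cosh(px) - cosh x sinh(px)`. -/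
noncomputable def F (p : ℝ) (x : ℝ) : ℝ :=
  p * Real.sinh x * Real.cosh (p * x) - Real.cosh x * Real.sinh (p * x)

lemma hasDerivAt_F (p x : ℝ) :
    HasDerivAt (F p) ((p ^ 2 - 1) * (Real.sinh x * Real.sinh (p * x))) x := by
  have hpx : HasDerivAt (fun y : ℝ => p * y) p x := by
    simpa using (hasDerivAt_id x).const_mul p
  have hs : HasDerivAt (fun y => Real.sinh (p * y)) (Real.cosh (p * x) * p) x :=
    (Real.hasDerivAt_sinh (p * x)).comp x hpx
  have hc : HasDerivAt (fun y => Real.cosh (p * y)) (Real.sinh (p * x) * p) x :=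
    (Real.hasDerivAt_cosh (p * x)).comp x hpx
  have h1 := ((Real.hasDerivAt_sinh x).const_mul p).mul hc
  have h2 := (Real.hasDerivAt_cosh x).mul hs
  have h := h1.sub h2
  have hch : Real.cosh x ^ 2 - Real.sinh x ^ 2 = 1 := by
    have := Real.cosh_sq_sub_sinh_sq x; linarith
  refine h.congr_deriv ?_
  nlinarith [hch]

/-- The comparison function `G(x) = (p²-1) x sinh x sinh(px) - F(x)`. -/
noncomputable def G (p : ℝ) (x : ℝ) : ℝ :=
  (p ^ 2 - 1) * (x * Real.sinh x * Real.sinh (p * x)) - F p x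

lemma hasDerivAt_G (p x : ℝ) :
    HasDerivAt (G p)
      ((p ^ 2 - 1) * (x * (Real.cosh x * Real.sinh (p * x)
        + p * Real.sinh x * Real.cosh (p * x)))) x := by
  have hpx : HasDerivAt (fun y : ℝ => p * y) p x := by
    simpa using (hasDerivAt_id x).const_mul p
  have hs : HasDerivAt (fun y => Real.sinh (p * y)) (Real.cosh (p * x) * p) x :=
    (Real.hasDerivAt_sinh (p * x)).comp x hpx
  have h1 := (((hasDerivAt_id x).mul (Real.hasDerivAt_sinh x)).mul hs).const_mul (p ^ 2 - 1)
  have h := h1.sub (hasDerivAt_F p x)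
  refine h.congr_deriv ?_
  simp only [id_eq, Pi.mul_apply]
  ring

lemma F_nonneg (p : ℝ) (hp : 1 ≤ p) {x : ℝ} (hx : 0 ≤ x) : 0 ≤ F p x := by
  have hmono : MonotoneOn (F p) (Set.Ici (0 : ℝ)) := by
    apply monotoneOn_of_deriv_nonneg (convex_Ici 0)
      (fun y _ => (hasDerivAt_F p y).continuousAt.continuousWithinAt)
      (fun y _ => (hasDerivAt_F p y).differentiableAt.differentiableWithinAt)
    intro y hy
    rw [interior_Ici, Set.mem_Ioi] at hy
    rw [(hasDerivAt_F p y).deriv]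
    have h1 : 0 ≤ Real.sinh y := le_of_lt (Real.sinh_pos_iff.2 hy)
    have h2 : 0 ≤ Real.sinh (p * y) :=
      le_of_lt (Real.sinh_pos_iff.2 (by positivity))
    have h3 : 0 ≤ p ^ 2 - 1 := by nlinarith
    positivity
  have h0 : F p 0 = 0 := by simp [F]
  have := hmono (Set.self_mem_Ici) (Set.mem_Ici.2 hx) hx
  simpa [h0] using this

lemma F_le (p : ℝ) (hp : 1 ≤ p) {x : ℝ} (hx : 0 ≤ x) :
    F p x ≤ (p ^ 2 - 1) * (x * Real.sinh x * Real.sinh (p * x)) := by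
  have hmono : MonotoneOn (G p) (Set.Ici (0 : ℝ)) := by
    apply monotoneOn_of_deriv_nonneg (convex_Ici 0)
      (fun y _ => (hasDerivAt_G p y).continuousAt.continuousWithinAt)
      (fun y _ => (hasDerivAt_G p y).differentiableAt.differentiableWithinAt)
    intro y hy
    rw [interior_Ici, Set.mem_Ioi] at hy
    rw [(hasDerivAt_G p y).deriv]
    have h1 : 0 ≤ Real.sinh y := le_of_lt (Real.sinh_pos_iff.2 hy)
    have h2 : 0 ≤ Real.sinh (p * y) :=
      le_of_lt (Real.sinh_pos_iff.2 (by positivity))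
    have h3 : 0 ≤ p ^ 2 - 1 := by nlinarith
    have h4 : 0 < Real.cosh y := Real.cosh_pos _
    have h5 : 0 < Real.cosh (p * y) := Real.cosh_pos _
    have hy' : 0 ≤ y := le_of_lt hy
    positivity
  have h0 : G p 0 = 0 := by simp [G, F]
  have := hmono (Set.self_mem_Ici) (Set.mem_Ici.2 hx) hx
  rw [h0] at this
  unfold G at this
  linarith

/-- The key identity: on `(0,∞)`, the integrand equals `F/(2p sinh(px) sinh²x cosh x)`. -/
lemma integrand_eq (p : ℕ) (hp : 2 ≤ p) {x : ℝ} (hx : 0 < x) :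
    ellipticIntegrand p x =
      F p x / (2 * p * Real.sinh (p * x) * Real.sinh x ^ 2 * Real.cosh x) := by
  have hp0 : (0 : ℝ) < (p : ℝ) := by exact_mod_cast Nat.lt_of_lt_of_le (by norm_num) hp
  have ha : (0 : ℝ) < Real.sinh x := Real.sinh_pos_iff.2 hx
  have hb : (0 : ℝ) < Real.cosh x := Real.cosh_pos _
  have hc : (0 : ℝ) < Real.sinh ((p : ℝ) * x) := Real.sinh_pos_iff.2 (by positivity)
  rw [ellipticIntegrand, F, Real.sinh_two_mul]
  field_simp

/-- Key bound: `0 ≤ g_p(x) ≤ (p²-1)/p · e^{-x}` for `x > 0`. -/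
lemma integrand_bound (p : ℕ) (hp : 2 ≤ p) {x : ℝ} (hx : 0 < x) :
    |ellipticIntegrand p x| ≤ ((p : ℝ) ^ 2 - 1) / p * Real.exp (-x) := by
  have hp0 : (0 : ℝ) < (p : ℝ) := by exact_mod_cast Nat.lt_of_lt_of_le (by norm_num) hp
  have hp1 : (1 : ℝ) ≤ (p : ℝ) := by exact_mod_cast Nat.one_le_of_lt hp
  have ha : (0 : ℝ) < Real.sinh x := Real.sinh_pos_iff.2 hx
  have hb : (0 : ℝ) < Real.cosh x := Real.cosh_pos _
  have hc : (0 : ℝ) < Real.sinh ((p : ℝ) * x) := Real.sinh_pos_iff.2 (by positivity)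
  have hD : (0 : ℝ) < 2 * p * Real.sinh ((p : ℝ) * x) * Real.sinh x ^ 2 * Real.cosh x := by
    positivity
  rw [integrand_eq p hp hx]
  rw [_root_.abs_of_nonneg (div_nonneg (F_nonneg _ hp1 hx.le) hD.le)]
  have h1 : F (p : ℝ) x / (2 * p * Real.sinh ((p : ℝ) * x) * Real.sinh x ^ 2 * Real.cosh x)
      ≤ ((p : ℝ) ^ 2 - 1) * (x * Real.sinh x * Real.sinh ((p : ℝ) * x))
        / (2 * p * Real.sinh ((p : ℝ) * x) * Real.sinh x ^ 2 * Real.cosh x) := by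
    gcongr
    exact F_le _ hp1 hx.le
  refine h1.trans ?_
  have heq : ((p : ℝ) ^ 2 - 1) * (x * Real.sinh x * Real.sinh ((p : ℝ) * x))
      / (2 * p * Real.sinh ((p : ℝ) * x) * Real.sinh x ^ 2 * Real.cosh x)
      = ((p : ℝ) ^ 2 - 1) * x / (p * (2 * Real.sinh x * Real.cosh x)) := by
    field_simp
  rw [heq]
  have hsx : x ≤ Real.sinh x := le_of_lt (Real.self_lt_sinh_iff.2 hx)
  have hcx : Real.exp x / 2 ≤ Real.cosh x := by
    rw [Real.cosh_eq]
    have := (Real.exp_pos (-x)).le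
    linarith
  have hsinh2 : x * Real.exp x ≤ 2 * Real.sinh x * Real.cosh x := by
    calc x * Real.exp x = 2 * x * (Real.exp x / 2) := by ring
    _ ≤ 2 * Real.sinh x * Real.cosh x := by
        apply mul_le_mul (by linarith) hcx (by positivity) (by positivity)
  have hnum : (0 : ℝ) ≤ ((p : ℝ) ^ 2 - 1) * x := by
    have hp2 : (0 : ℝ) ≤ (p : ℝ) ^ 2 - 1 := by nlinarith [sq_nonneg ((p : ℝ) - 1)]
    exact mul_nonneg hp2 hx.le
  calc ((p : ℝ) ^ 2 - 1) * x / (p * (2 * Real.sinh x * Real.cosh x))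
      ≤ ((p : ℝ) ^ 2 - 1) * x / (p * (x * Real.exp x)) := by
        apply div_le_div_of_nonneg_left hnum (by positivity)
        have := Real.exp_pos x
        nlinarith
    _ = ((p : ℝ) ^ 2 - 1) / p * Real.exp (-x) := by
        rw [Real.exp_neg]
        field_simp

lemma continuousOn_integrand (p : ℕ) (hp : 2 ≤ p) :
    ContinuousOn (fun x => ellipticIntegrand p x) (Set.Ioi (0 : ℝ)) := by
  have hp0 : (0 : ℝ) < (p : ℝ) := by exact_mod_cast Nat.lt_of_lt_of_le (by norm_num) hp
  have hc1 : Continuous fun x : ℝ => Real.cosh ((p : ℝ) * x) :=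
    Real.continuous_cosh.comp (continuous_const.mul continuous_id)
  have hc2 : Continuous fun x : ℝ => Real.sinh ((p : ℝ) * x) :=
    Real.continuous_sinh.comp (continuous_const.mul continuous_id)
  have hc3 : Continuous fun x : ℝ => Real.sinh (2 * x) :=
    Real.continuous_sinh.comp (continuous_const.mul continuous_id)
  apply ContinuousOn.sub
  · apply ContinuousOn.div
    · apply ContinuousOn.div hc1.continuousOn hc2.continuousOn
      intro x hx
      have hx' : 0 < x := Set.mem_Ioi.1 hx
      exact ne_of_gt (Real.sinh_pos_iff.2 (by positivity))
    · exact hc3.continuousOn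
    · intro x hx
      have hx' : 0 < x := Set.mem_Ioi.1 hx
      exact ne_of_gt (Real.sinh_pos_iff.2 (by positivity))
  · apply ContinuousOn.div continuousOn_const
    · exact (continuous_const.mul (Real.continuous_sinh.pow 2)).continuousOn
    · intro x hx
      have hx' : 0 < x := Set.mem_Ioi.1 hx
      have := Real.sinh_pos_iff.2 hx'
      positivity

end EllipticAux

theorem elliptic_mellin_integrable (p : ℕ) (hp : 2 ≤ p) (s : ℂ) (hs : 0 < s.re) :
    MeasureTheory.IntegrableOn
      (fun x : ℝ => (x : ℂ) ^ (2 * s - 1) * (ellipticIntegrand p x : ℂ))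
      (Set.Ioi (0 : ℝ)) := by
  have hp0 : (0 : ℝ) < (p : ℝ) := by exact_mod_cast Nat.lt_of_lt_of_le (by norm_num) hp
  set σ : ℝ := s.re with hσdef
  have hσ : 0 < 2 * σ := by linarith
  set C : ℝ := ((p : ℝ) ^ 2 - 1) / p with hCdef
  have hC : 0 ≤ C := by
    apply div_nonneg _ hp0.le
    have : (1 : ℝ) ≤ (p : ℝ) := by exact_mod_cast Nat.one_le_of_lt hp
    nlinarith
  have hint : Integrable (fun x : ℝ => C * (Real.exp (-x) * x ^ (2 * σ - 1)))
      (volume.restrict (Set.Ioi (0 : ℝ))) :=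
    (Real.GammaIntegral_convergent hσ).const_mul C
  apply Integrable.mono' hint
  · -- measurability
    apply ContinuousOn.aestronglyMeasurable _ measurableSet_Ioi
    apply ContinuousOn.mul
    · apply ContinuousOn.cpow Complex.continuous_ofReal.continuousOn continuousOn_const
      intro x hx
      exact Complex.ofReal_mem_slitPlane.2 (Set.mem_Ioi.1 hx)
    · exact Complex.continuous_ofReal.comp_continuousOn
        (EllipticAux.continuousOn_integrand p hp)
  · rw [MeasureTheory.ae_restrict_iff' measurableSet_Ioi]
    filter_upwards with x
    intro hx
    have hx' : 0 < x := Set.mem_Ioi.1 hx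
    rw [norm_mul]
    have h1 : ‖(x : ℂ) ^ (2 * s - 1)‖ = x ^ (2 * σ - 1) := by
      rw [Complex.norm_cpow_eq_rpow_re_of_pos hx']
      congr 1
      simp [hσdef]
    have h2 : ‖(ellipticIntegrand p x : ℂ)‖ = |ellipticIntegrand p x| := by
      rw [Complex.norm_real, Real.norm_eq_abs]
    rw [h1, h2]
    have hb := EllipticAux.integrand_bound p hp hx'
    calc x ^ (2 * σ - 1) * |ellipticIntegrand p x|
        ≤ x ^ (2 * σ - 1) * (C * Real.exp (-x)) := by
          apply mul_le_mul_of_nonneg_left hb (Real.rpow_nonneg hx'.le _)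
      _ = C * (Real.exp (-x) * x ^ (2 * σ - 1)) := by ring
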